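/- In the universal enveloping algebra of sl_2 over ℚ, for every k ≥ 0, the element (e^k/k!) · (f^k/k!) is congruent, modulo the left ideal generated by e, to the binomial expression binom(h, k) := h(h−1)⋯(h−k+1)/k!. -/

import Mathlib

open LieAlgebra.SpecialLinear UniversalEnvelopingAlgebra

section Abstract
variable {A : Type*} [Ring A] [Algebra ℚ A] (E F H : A)
variable (hEF : E * F = F * E + H)
variable (hHF : H * F = F * H - (2:ℚ) • F)
variable (hEH : E * H = H * E - (2:ℚ) • E)

include hEF hHF in
theorem aux_comm (k : ℕ) :
    E * F ^ (k+1) = F ^ (k+1) * E + ((k:ℚ)+1) • (F ^ k * (H - (k:ℚ) • 1)) := by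
  induction k with
  | zero => simpa using hEF
  | succ k ih =>
      have hstep : (H - ((k:ℚ)) • 1) * F = F * (H - ((k:ℚ)+2) • 1) := by
        rw [sub_mul, hHF, smul_mul_assoc, one_mul, mul_sub, mul_smul_comm, mul_one]
        module
      rw [pow_succ F (k+1), ← mul_assoc, ih]
      push_cast
      rw [add_mul, smul_mul_assoc, mul_assoc, mul_assoc (F^k), hstep, hEF]
      simp only [mul_add, mul_sub, smul_sub, smul_add, mul_smul_comm, smul_mul_assoc,
        mul_one, one_mul, smul_smul, ← mul_assoc, ← pow_succ]
      module

include hEF hHF hEH in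
theorem aux_core (k : ℕ) : ∃ u : A,
    E ^ k * F ^ k = (k.factorial : ℚ) •
      (((List.range k).map (fun i => H - (i : ℚ) • 1)).prod) + u * E := by
  induction k with
  | zero => exact ⟨0, by simp⟩
  | succ k ih =>
      obtain ⟨u, hu⟩ := ih
      refine ⟨E ^ k * F ^ (k+1) + ((k:ℚ)+1) • (u * (H - ((k:ℚ)+2) • 1)), ?_⟩
      have hP : ((List.range (k+1)).map (fun i => H - (i : ℚ) • 1)).prod
          = ((List.range k).map (fun i => H - (i : ℚ) • 1)).prod * (H - (k:ℚ) • 1) := by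
        simp [List.range_succ]
      have hstepE : E * (H - ((k:ℚ)) • 1) = (H - ((k:ℚ)+2) • 1) * E := by
        rw [mul_sub, hEH, mul_smul_comm, mul_one, sub_mul, smul_mul_assoc, one_mul]
        module
      rw [pow_succ E k, mul_assoc, aux_comm E F H hEF hHF k, Nat.factorial_succ, hP]
      rw [mul_add, mul_smul_comm, ← mul_assoc (E^k) (F^k), hu]
      rw [add_mul, smul_mul_assoc, mul_assoc u E, hstepE, ← mul_assoc u]
      push_cast
      simp only [smul_add, smul_smul, add_mul, smul_mul_assoc, ← mul_assoc]
      module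

end Abstract

attribute [local instance 100] LieRing.ofAssociativeRing

set_option maxHeartbeats 1000000 in
/-- In U(sl_2(ℚ)): `(e^k/k!)·(f^k/k!) ≡ binom(h,k) = h(h−1)⋯(h−k+1)/k!` modulo the
left ideal generated by `e`. -/
theorem stmt_5 (k : ℕ)
    (e f h : LieAlgebra.SpecialLinear.sl (Fin 2) ℚ)
    (he : e = LieAlgebra.SpecialLinear.single 0 1 (by decide) (1 : ℚ))
    (hf : f = LieAlgebra.SpecialLinear.single 1 0 (by decide) (1 : ℚ))
    (hh : h = ⟨Matrix.single 0 0 (1 : ℚ) - Matrix.single 1 1 (1 : ℚ), by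
      show _ ∈ LinearMap.ker (Matrix.traceLinearMap (Fin 2) ℚ ℚ)
      rw [LinearMap.mem_ker]; simp [Matrix.trace, Fin.sum_univ_two, Matrix.single]⟩) :
    ((k.factorial : ℚ)⁻¹ • (ι (R := ℚ) e) ^ k) * ((k.factorial : ℚ)⁻¹ • (ι (R := ℚ) f) ^ k) -
      (k.factorial : ℚ)⁻¹ •
        (((List.range k).map (fun i => ι (R := ℚ) h - (i : ℚ) • 1)).prod)
      ∈ Ideal.span {ι (R := ℚ) e} := by
  -- bracket relations in sl2
  have bef : ⁅e, f⁆ = h := by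
    apply Subtype.ext
    rw [sl_bracket, he, hf, hh]
    ext i j
    fin_cases i <;> fin_cases j <;>
      simp [Matrix.mul_apply, Fin.sum_univ_two, Matrix.single]
  have bhf : ⁅h, f⁆ = (-2 : ℚ) • f := by
    apply Subtype.ext
    have hcoe : (((-2:ℚ) • f : sl (Fin 2) ℚ) : Matrix (Fin 2) (Fin 2) ℚ)
        = (-2:ℚ) • (f : Matrix (Fin 2) (Fin 2) ℚ) := rfl
    rw [sl_bracket, hcoe, hh, hf]
    ext i j
    fin_cases i <;> fin_cases j <;>
      simp [Matrix.mul_apply, Fin.sum_univ_two, Matrix.single,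
        SetLike.val_smul, Matrix.smul_apply, val_single, smul_eq_mul] <;> norm_num
  have bhe : ⁅h, e⁆ = (2 : ℚ) • e := by
    apply Subtype.ext
    have hcoe : (((2:ℚ) • e : sl (Fin 2) ℚ) : Matrix (Fin 2) (Fin 2) ℚ)
        = (2:ℚ) • (e : Matrix (Fin 2) (Fin 2) ℚ) := rfl
    rw [sl_bracket, hcoe, hh, he]
    ext i j
    fin_cases i <;> fin_cases j <;>
      simp [Matrix.mul_apply, Fin.sum_univ_two, Matrix.single,
        SetLike.val_smul, Matrix.smul_apply, val_single, smul_eq_mul] <;> norm_num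
  have hEF : ι (R := ℚ) e * ι (R := ℚ) f = ι (R := ℚ) f * ι (R := ℚ) e + ι (R := ℚ) h := by
    have h1 := LieHom.map_lie (ι ℚ) e f
    rw [bef, Ring.lie_def] at h1
    rw [h1]; abel
  have hHF : ι (R := ℚ) h * ι (R := ℚ) f
      = ι (R := ℚ) f * ι (R := ℚ) h - (2:ℚ) • ι (R := ℚ) f := by
    have h1 := LieHom.map_lie (ι ℚ) h f
    rw [bhf, Ring.lie_def, map_smul] at h1
    have h2 : ι (R := ℚ) h * ι (R := ℚ) f
        = ι (R := ℚ) f * ι (R := ℚ) h + (-2:ℚ) • ι (R := ℚ) f := by rw [h1]; abel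
    rw [h2]; module
  have hEH : ι (R := ℚ) e * ι (R := ℚ) h
      = ι (R := ℚ) h * ι (R := ℚ) e - (2:ℚ) • ι (R := ℚ) e := by
    have h1 := LieHom.map_lie (ι ℚ) h e
    rw [bhe, Ring.lie_def, map_smul] at h1
    rw [h1]; abel
  obtain ⟨u, hu⟩ := aux_core (ι (R := ℚ) e) (ι (R := ℚ) f) (ι (R := ℚ) h) hEF hHF hEH k
  rw [Ideal.mem_span_singleton']
  refine ⟨((k.factorial : ℚ)⁻¹ * (k.factorial : ℚ)⁻¹) • u, ?_⟩
  have hfac : (k.factorial : ℚ) ≠ 0 := Nat.cast_ne_zero.2 k.factorial_ne_zero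
  rw [smul_mul_smul_comm, hu, smul_add, smul_smul, smul_mul_assoc]
  rw [mul_assoc, inv_mul_cancel₀ hfac, mul_one]
  abel
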